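/- Let x_1,…,x_n ∈ ℝ^p with n > p be points in general position. Then there exists c > 0 such that for every affine hyperplane H ⊆ ℝ^p (i.e., every set of the form {x ∈ ℝ^p : ⟨x,v⟩ = b} with v a unit vector and b ∈ ℝ), at most p of the indices i ∈ {1,…,n} satisfy dist(x_i, H) < c. Equivalently, the infimum over all affine hyperplanes H of the (p+1)-st smallest value among the distances dist(x_1,H),…,dist(x_n,H) is strictly positive. -/

import Mathlib

open Set
open scoped RealInnerProductSpace

/-- Points are in general position when no affine hyperplane contains more than `p` of them. -/
def GeneralPosition {p n : ℕ} (x : Fin n → EuclideanSpace ℝ (Fin p)) : Prop :=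
  ∀ v : EuclideanSpace ℝ (Fin p), v ≠ 0 → ∀ b : ℝ, Set.ncard {i | ⟪x i, v⟫ = b} ≤ p

/-- Lower bound on the distance to a hyperplane. -/
lemma abs_le_infDist_hyperplane {p : ℕ} (z v : EuclideanSpace ℝ (Fin p)) (b : ℝ)
    (hv : ‖v‖ = 1) : |⟪z, v⟫ - b| ≤ Metric.infDist z {y | ⟪y, v⟫ = b} := by
  have hvne : v ≠ 0 := by intro h; rw [h, norm_zero] at hv; norm_num at hv
  have hne : ({y | ⟪y, v⟫ = b} : Set (EuclideanSpace ℝ (Fin p))).Nonempty := by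
    refine ⟨b • v, ?_⟩
    have h1 : ⟪b • v, v⟫ = b * ⟪v, v⟫ := real_inner_smul_left _ _ _
    have h2 : ⟪v, v⟫ = 1 := by
      rw [real_inner_self_eq_norm_sq, hv]; norm_num
    simp only [Set.mem_setOf_eq, h1, h2, mul_one]
  by_contra h
  push_neg at h
  obtain ⟨y, hy, hlt⟩ := (Metric.infDist_lt_iff hne).1 h
  have heq : ⟪z, v⟫ - b = ⟪z - y, v⟫ := by
    rw [inner_sub_left, hy]
  have : |⟪z, v⟫ - b| ≤ dist z y := by
    rw [heq]
    calc |⟪z - y, v⟫| ≤ ‖z - y‖ * ‖v‖ := abs_real_inner_le_norm _ _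
      _ = dist z y := by rw [hv, mul_one, dist_eq_norm]
  linarith

theorem general_position_hyperplane_distance_gap {p n : ℕ} (hn : p < n)
    (x : Fin n → EuclideanSpace ℝ (Fin p)) (hgen : GeneralPosition x) :
    ∃ c : ℝ, 0 < c ∧ ∀ (v : EuclideanSpace ℝ (Fin p)) (b : ℝ), ‖v‖ = 1 →
      Set.ncard {i | Metric.infDist (x i) {y | ⟪y, v⟫ = b} < c} ≤ p := by
  -- trivial case p = 0
  rcases Nat.eq_zero_or_pos p with hp | hp
  · subst hp
    refine ⟨1, one_pos, fun v b hv => ?_⟩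
    exfalso
    haveI : Subsingleton (EuclideanSpace ℝ (Fin 0)) :=
      ⟨fun a b => by ext i; exact i.elim0⟩
    have : v = 0 := Subsingleton.elim v 0
    rw [this, norm_zero] at hv; norm_num at hv
  haveI : Nontrivial (EuclideanSpace ℝ (Fin p)) := by
    have : Nonempty (Fin p) := ⟨⟨0, hp⟩⟩
    infer_instance
  have hnn : 0 < n := hp.trans hn
  -- the family of (p+1)-subsets
  set 𝒮 : Finset (Finset (Fin n)) := Finset.univ.powersetCard (p + 1) with h𝒮
  have h𝒮ne : 𝒮.Nonempty := Finset.powersetCard_nonempty.2 (by simpa using hn)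
  have hScard : ∀ S ∈ 𝒮, S.card = p + 1 := fun S hS =>
    (Finset.mem_powersetCard.1 hS).2
  have hSne : ∀ S ∈ 𝒮, S.Nonempty := fun S hS =>
    Finset.card_pos.1 (by rw [hScard S hS]; omega)
  -- the gap function
  set g : EuclideanSpace ℝ (Fin p) × ℝ → ℝ := fun z =>
    𝒮.attach.inf' (h𝒮ne.attach) fun S =>
      (S.1).sup' (hSne S.1 S.2) fun i => |⟪x i, z.1⟫ - z.2| with hg
  have hgcont : Continuous g := by
    apply Continuous.finset_inf'_apply
    intro S _
    apply Continuous.finset_sup'_apply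
    intro i _
    have : Continuous fun z : EuclideanSpace ℝ (Fin p) × ℝ => ⟪x i, z.1⟫ - z.2 :=
      ((continuous_const.inner continuous_fst)).sub continuous_snd
    exact this.abs
  -- the compact domain
  set M : ℝ := Finset.univ.sup' (Finset.univ_nonempty_iff.2 ⟨⟨0, hnn⟩⟩) fun i => ‖x i‖ with hM
  have hMx : ∀ i, ‖x i‖ ≤ M := fun i => Finset.le_sup' (f := fun j => ‖x j‖) (Finset.mem_univ i)
  set K : Set (EuclideanSpace ℝ (Fin p) × ℝ) :=
    (Metric.sphere 0 1) ×ˢ (Set.Icc (-M) M) with hK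
  have hKc : IsCompact K := (isCompact_sphere 0 1).prod isCompact_Icc
  have hKne : K.Nonempty := by
    refine Set.Nonempty.prod ?_ ?_
    · exact NormedSpace.sphere_nonempty.2 zero_le_one
    · refine ⟨0, ?_⟩
      have h0M : (0 : ℝ) ≤ M := (norm_nonneg _).trans (hMx ⟨0, hnn⟩)
      exact ⟨by linarith, h0M⟩
  obtain ⟨z₀, hz₀K, hmin⟩ := hKc.exists_isMinOn hKne hgcont.continuousOn
  refine ⟨g z₀, ?_, ?_⟩
  · -- positivity via general position
    by_contra h
    push_neg at h
    obtain ⟨S, hS𝒮, hSeq⟩ := Finset.exists_mem_eq_inf' h𝒮ne.attach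
      (fun S => (S.1).sup' (hSne S.1 S.2) fun i => |⟪x i, z₀.1⟫ - z₀.2|)
    have hsup : (S.1).sup' (hSne S.1 S.2) (fun i => |⟪x i, z₀.1⟫ - z₀.2|) ≤ 0 :=
      hSeq.symm.trans_le h
    have hzv : ‖z₀.1‖ = 1 := by
      have := hz₀K.1
      simpa [mem_sphere_iff_norm] using this
    have hvne : z₀.1 ≠ 0 := by intro hh; rw [hh, norm_zero] at hzv; norm_num at hzv
    have hsub : (↑S.1 : Set (Fin n)) ⊆ {i | ⟪x i, z₀.1⟫ = z₀.2} := by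
      intro i hi
      have h1 : |⟪x i, z₀.1⟫ - z₀.2| ≤ 0 :=
        le_trans (Finset.le_sup' (f := fun j => |⟪x j, z₀.1⟫ - z₀.2|) hi) hsup
      have h2 : |⟪x i, z₀.1⟫ - z₀.2| = 0 := le_antisymm h1 (abs_nonneg _)
      have := abs_eq_zero.1 h2
      simpa [sub_eq_zero] using this
    have hcard : p + 1 ≤ ({i | ⟪x i, z₀.1⟫ = z₀.2} : Set (Fin n)).ncard := by
      have := Set.ncard_le_ncard hsub (Set.toFinite _)
      rwa [Set.ncard_coe_finset, hScard S.1 S.2] at this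
    have := hgen z₀.1 hvne z₀.2
    omega
  · -- main bound
    intro v b hv
    -- reduce to the linear functional distance
    have hsub1 : {i | Metric.infDist (x i) {y | ⟪y, v⟫ = b} < g z₀} ⊆
        {i | |⟪x i, v⟫ - b| < g z₀} := by
      intro i hi
      exact lt_of_le_of_lt (abs_le_infDist_hyperplane (x i) v b hv) hi
    -- clamp b
    set b' : ℝ := max (-M) (min b M) with hb'
    have hb'mem : b' ∈ Set.Icc (-M) M := by
      have h0M : (0 : ℝ) ≤ M := (norm_nonneg _).trans (hMx ⟨0, hnn⟩)
      constructor
      · exact le_max_left _ _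
      · rcases le_total b M with h | h
        · simp [hb', min_eq_left h]; constructor <;> linarith
        · simp [hb', min_eq_right h]; linarith
    have hinner : ∀ i, |⟪x i, v⟫| ≤ M := by
      intro i
      calc |⟪x i, v⟫| ≤ ‖x i‖ * ‖v‖ := abs_real_inner_le_norm _ _
        _ = ‖x i‖ := by rw [hv, mul_one]
        _ ≤ M := hMx i
    have hsub2 : {i | |⟪x i, v⟫ - b| < g z₀} ⊆ {i | |⟪x i, v⟫ - b'| < g z₀} := by
      intro i hi
      simp only [Set.mem_setOf_eq] at hi ⊢
      have h1 := hinner i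
      have h2 := abs_le.1 h1
      rcases le_total b M with hbM | hbM
      · rcases le_total (-M) b with hMb | hMb
        · have : b' = b := by rw [hb', min_eq_left hbM, max_eq_right hMb]
          rwa [this]
        · have hb'eq : b' = -M := by
            rw [hb']
            have : min b M = b := min_eq_left hbM
            rw [this]
            exact max_eq_left (by linarith)
          rw [hb'eq]
          rw [abs_sub_lt_iff] at hi ⊢
          constructor <;> [skip; skip] <;> cases' hi with hi1 hi2 <;> linarith
      · have hb'eq : b' = M := by
          rw [hb', min_eq_right hbM]
          exact max_eq_right (by linarith)
        rw [hb'eq]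
        rw [abs_sub_lt_iff] at hi ⊢
        constructor <;> cases' hi with hi1 hi2 <;> linarith
    have hmem : (v, b') ∈ K := ⟨by simpa [mem_sphere_iff_norm] using hv, hb'mem⟩
    have hle : g z₀ ≤ g (v, b') := hmin hmem
    -- if more than p indices were close, some (p+1)-subset would contradict minimality
    by_contra hcon
    push_neg at hcon
    have hfin : ({i | |⟪x i, v⟫ - b'| < g z₀} : Set (Fin n)).Finite := Set.toFinite _
    have hcard : p + 1 ≤ hfin.toFinset.card := by
      have h1 : ({i | Metric.infDist (x i) {y | ⟪y, v⟫ = b} < g z₀} : Set (Fin n)).ncard ≤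
          hfin.toFinset.card := by
        rw [← Set.ncard_coe_finset, Set.Finite.coe_toFinset]
        exact Set.ncard_le_ncard (hsub1.trans hsub2) hfin
      omega
    obtain ⟨T, hTsub, hTcard⟩ := Finset.exists_subset_card_eq hcard
    have hT𝒮 : T ∈ 𝒮 := Finset.mem_powersetCard.2 ⟨Finset.subset_univ _, hTcard⟩
    have hTne : T.Nonempty := hSne T hT𝒮
    have hsuplt : T.sup' hTne (fun i => |⟪x i, (v, b').1⟫ - (v, b').2|) < g z₀ := by
      rw [Finset.sup'_lt_iff]
      intro i hi
      have := hTsub hi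
      rw [Set.Finite.mem_toFinset] at this
      exact this
    have hginf : g (v, b') ≤ T.sup' hTne fun i => |⟪x i, (v, b').1⟫ - (v, b').2| := by
      have : (⟨T, hT𝒮⟩ : {S // S ∈ 𝒮}) ∈ 𝒮.attach := Finset.mem_attach _ _
      exact Finset.inf'_le _ this
    linarith
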